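/- (Algebraic form of Theorem 2 of the paper.) Let α, β, γ, δ be real numbers with α·δ − β·γ ≠ 0 and ψ̃(t) := (α·t + β)/(γ·t + δ). Let M ∈ Matrix (Fin 3) (Fin 3) ℝ be invertible, b ∈ ℝ³, let q₁, q₂ : Fin 3 → ℝ[X] be triples of polynomials each of whose components has only unit common divisors (in particular, not all zero), let n := max over i of natDegree (q₂ i), let p₁, p₂ : ℝ → ℝ³ be functions, and let a, c : ℝ → ℝ be functions that agree, off a finite set, with evaluations of rational functions a_r, c_r ∈ RatFunc ℝ. Suppose there is a finite set F ⊆ ℝ such that for every t ∉ F (with γ·t + δ ≠ 0 and all evaluations defined) and every s ∈ ℝ: M.mulVec (p₁(t) + s • (fun i => Polynomial.eval t (q₁ i))) + b = p₂(ψ̃(t)) + (a(t)·s + c(t)) • (fun i => Polynomial.eval (ψ̃ t) (q₂ i)). Then there exists a nonzero real number k such that a_r = algebraMap (C k * (C γ * X + C δ)^n) in RatFunc ℝ; equivalently, a(t) = k·(γ·t + δ)^n for all t outside a finite set. -/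

import Mathlib

open Polynomial

-- cofinite agreement implies equality
lemma eq_of_eval_cofinite {p q : ℝ[X]} {S : Set ℝ} (hS : S.Finite)
    (hpq : ∀ t ∉ S, p.eval t = q.eval t) : p = q := by
  by_contra hne
  have h0 : p - q ≠ 0 := sub_ne_zero.2 hne
  have hfin : {x : ℝ | (p - q).IsRoot x}.Finite := Polynomial.finite_setOf_isRoot h0
  have hsub : Sᶜ ⊆ {x : ℝ | (p - q).IsRoot x} := by
    intro t ht
    simp only [Set.mem_setOf_eq, IsRoot, eval_sub, sub_eq_zero]
    exact hpq t ht
  exact (hS.infinite_compl).mono hsub hfin |>.elim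

noncomputable def mob (α β γ δ : ℝ) (n : ℕ) (q : ℝ[X]) : ℝ[X] :=
  ∑ j ∈ Finset.range (n+1), C (q.coeff j) * (C α * X + C β)^j * (C γ * X + C δ)^(n-j)

lemma natDegree_mob_le (α β γ δ : ℝ) (n : ℕ) (q : ℝ[X]) :
    (mob α β γ δ n q).natDegree ≤ n := by
  refine natDegree_sum_le_of_forall_le _ _ fun j hj => ?_
  simp only [Finset.mem_range] at hj
  calc (C (q.coeff j) * (C α * X + C β)^j * (C γ * X + C δ)^(n-j)).natDegree
      ≤ (C (q.coeff j) * (C α * X + C β)^j).natDegree + ((C γ * X + C δ)^(n-j)).natDegree :=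
        natDegree_mul_le
    _ ≤ ((C (q.coeff j)).natDegree + ((C α * X + C β)^j).natDegree) + ((C γ * X + C δ)^(n-j)).natDegree := by
        gcongr; exact natDegree_mul_le
    _ ≤ (0 + j * 1) + (n - j) * 1 := by
        gcongr
        · exact le_of_eq (natDegree_C _)
        · exact natDegree_pow_le.trans (by gcongr; exact natDegree_linear_le)
        · exact natDegree_pow_le.trans (by gcongr; exact natDegree_linear_le)
    _ ≤ n := by omega

lemma eval_mob {α β γ δ : ℝ} {n : ℕ} {q : ℝ[X]} (hq : q.natDegree ≤ n)
    {t : ℝ} (ht : γ * t + δ ≠ 0) :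
    (mob α β γ δ n q).eval t = (γ * t + δ)^n * q.eval ((α * t + β) / (γ * t + δ)) := by
  rw [mob, eval_finset_sum, eval_eq_sum_range' (Nat.lt_succ_of_le hq), Finset.mul_sum]
  refine Finset.sum_congr rfl fun j hj => ?_
  simp only [Finset.mem_range, Nat.lt_succ_iff] at hj
  simp only [eval_mul, eval_pow, eval_add, eval_C, eval_X, div_pow]
  have hpow : (γ * t + δ) ^ (n - j) * (γ * t + δ) ^ j = (γ * t + δ) ^ n := by
    rw [← pow_add]; congr 1; omega
  field_simp
  have ht' : t * γ + δ ≠ 0 := by rwa [mul_comm t γ]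
  have hpow' : (t * γ + δ) ^ n = (t * γ + δ) ^ (n - j) * (t * γ + δ) ^ j := by
    rw [← pow_add]; congr 1; omega
  rw [hpow', eq_div_iff (pow_ne_zero _ ht')]; ring

lemma finite_lin {u v : ℝ} (h : ¬(u = 0 ∧ v = 0)) : {t : ℝ | u * t + v = 0}.Finite := by
  have hne : (C u * X + C v : ℝ[X]) ≠ 0 := by
    intro h0
    exact h ⟨by simpa using congrArg (fun p => coeff p 1) h0,
      by simpa using congrArg (fun p => coeff p 0) h0⟩
  refine (Polynomial.finite_setOf_isRoot hne).subset ?_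
  intro t ht
  simpa [IsRoot] using ht

lemma mobinv_mob {α β γ δ : ℝ} (hdet : α * δ - β * γ ≠ 0) {n : ℕ} {q : ℝ[X]}
    (hq : q.natDegree ≤ n) :
    mob δ (-β) (-γ) α n (mob α β γ δ n q) = C ((α * δ - β * γ)^n) * q := by
  have hne : ¬((-γ : ℝ) = 0 ∧ α = 0) := by
    rintro ⟨h1, h2⟩; apply hdet; rw [h2]; simp [neg_eq_zero.1 h1]
  apply eq_of_eval_cofinite (finite_lin hne)
  intro t ht
  have h1 : -γ * t + α ≠ 0 := ht
  have h2 : γ * ((δ * t + -β) / (-γ * t + α)) + δ = (α * δ - β * γ) / (-γ * t + α) := by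
    rw [mul_div_assoc', div_add' _ _ _ h1]; congr 1; ring
  have h3 : γ * ((δ * t + -β) / (-γ * t + α)) + δ ≠ 0 := by
    rw [h2]; exact div_ne_zero hdet h1
  rw [eval_mob (natDegree_mob_le _ _ _ _ _ _) h1, eval_mob hq h3, h2, eval_mul, eval_C]
  have h5 : α * ((δ * t + -β) / (-γ * t + α)) + β = ((α * δ - β * γ) * t) / (-γ * t + α) := by
    rw [mul_div_assoc', div_add' _ _ _ h1]; congr 1; ring
  have h4 : (α * ((δ * t + -β) / (-γ * t + α)) + β) / ((α * δ - β * γ) / (-γ * t + α)) = t := by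
    have hb : (α * δ - β * γ) / (-γ * t + α) ≠ 0 := div_ne_zero hdet h1
    rw [h5, div_eq_iff hb, mul_div_assoc']; congr 1; ring
  rw [h4, div_pow, ← mul_assoc, mul_comm ((-γ*t+α)^n), div_mul_cancel₀]
  exact pow_ne_zero _ h1

lemma mob_mobinv {α β γ δ : ℝ} (hdet : α * δ - β * γ ≠ 0) {n : ℕ} {q : ℝ[X]}
    (hq : q.natDegree ≤ n) :
    mob α β γ δ n (mob δ (-β) (-γ) α n q) = C ((α * δ - β * γ)^n) * q := by
  have := mobinv_mob (α := δ) (β := -β) (γ := -γ) (δ := α)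
    (by rw [show δ * α - -β * -γ = α * δ - β * γ by ring]; exact hdet) hq
  rw [show δ * α - -β * -γ = α * δ - β * γ by ring] at this
  simpa using this

lemma mob_mul {α β γ δ : ℝ} (hne : ¬(γ = 0 ∧ δ = 0)) {m n : ℕ} {u v : ℝ[X]}
    (hu : u.natDegree ≤ m) (hv : v.natDegree ≤ n) :
    mob α β γ δ (m + n) (u * v) = mob α β γ δ m u * mob α β γ δ n v := by
  apply eq_of_eval_cofinite (finite_lin hne)
  intro t ht
  have h1 : γ * t + δ ≠ 0 := ht
  rw [eval_mul, eval_mob (le_trans natDegree_mul_le (add_le_add hu hv)) h1,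
    eval_mob hu h1, eval_mob hv h1, eval_mul, pow_add]
  ring

lemma mob_C {α β γ δ : ℝ} (hne : ¬(γ = 0 ∧ δ = 0)) {m : ℕ} (u : ℝ) :
    mob α β γ δ m (C u) = C u * (C γ * X + C δ)^m := by
  apply eq_of_eval_cofinite (finite_lin hne)
  intro t ht
  have h1 : γ * t + δ ≠ 0 := ht
  rw [eval_mob (by simp) h1, eval_mul, eval_C, eval_pow, eval_C, mul_comm]
  simp

lemma mob_not_dvd {α β γ δ : ℝ} (hdet : α * δ - β * γ ≠ 0) (hγ : γ ≠ 0) {n : ℕ} {q : ℝ[X]}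
    (hq0 : q ≠ 0) (hdeg : q.natDegree = n) :
    ¬ (C γ * X + C δ) ∣ mob α β γ δ n q := by
  intro hdvd
  set t₀ : ℝ := -δ / γ with ht₀
  have hroot : (C γ * X + C δ).eval t₀ = 0 := by
    simp only [eval_add, eval_mul, eval_C, eval_X, ht₀]
    field_simp
    ring
  have hmrt : (mob α β γ δ n q).eval t₀ = 0 := by
    obtain ⟨e, he⟩ := hdvd
    rw [he, eval_mul, hroot, zero_mul]
  have hval : (mob α β γ δ n q).eval t₀ = q.coeff n * (α * t₀ + β)^n := by
    rw [mob, eval_finset_sum]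
    rw [Finset.sum_eq_single n]
    · have h0 : γ * t₀ + δ = 0 := by rw [ht₀]; field_simp; ring
      simp [h0]
    · intro j hj hjn
      simp only [Finset.mem_range, Nat.lt_succ_iff] at hj
      have h0 : γ * t₀ + δ = 0 := by rw [ht₀]; field_simp; ring
      simp only [eval_mul, eval_pow, eval_add, eval_C, eval_X, h0]
      rw [zero_pow (by omega)]
      ring
    · intro hn; exact absurd (Finset.self_mem_range_succ n) hn
  have hαβ : α * t₀ + β ≠ 0 := by
    rw [ht₀]
    intro hz
    apply hdet
    field_simp at hz
    nlinarith [hz]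
  have hcn : q.coeff n ≠ 0 := by
    rw [← hdeg]; exact mt leadingCoeff_eq_zero.1 hq0
  rw [hval] at hmrt
  exact (mul_ne_zero hcn (pow_ne_zero _ hαβ)) hmrt

lemma mob_zero (α β γ δ : ℝ) (n : ℕ) : mob α β γ δ n 0 = 0 := by
  simp [mob]

lemma dvd_of_dvd_unit_mul {u : ℝ} (hu : u ≠ 0) {p q : ℝ[X]} (hpq : p ∣ C u * q) : p ∣ q := by
  obtain ⟨e, he⟩ := hpq
  refine ⟨C u⁻¹ * e, ?_⟩
  calc q = C u⁻¹ * (C u * q) := by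
        rw [← mul_assoc, ← C_mul, inv_mul_cancel₀ hu, C_1, one_mul]
    _ = p * (C u⁻¹ * e) := by rw [he]; ring

lemma mob_ne_zero {α β γ δ : ℝ} (hdet : α * δ - β * γ ≠ 0) {n : ℕ} {q : ℝ[X]}
    (hq : q.natDegree ≤ n) (hq0 : q ≠ 0) : mob α β γ δ n q ≠ 0 := by
  intro h0
  have hmm := mobinv_mob hdet hq
  rw [h0, mob_zero] at hmm
  have := hmm.symm
  rw [mul_eq_zero] at this
  rcases this with h | h
  · exact pow_ne_zero n hdet (C_eq_zero.1 h)
  · exact hq0 h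

lemma mob_common_div {α β γ δ : ℝ} (hdet : α * δ - β * γ ≠ 0) (q₂ : Fin 3 → ℝ[X])
    (hc2 : ∀ d : ℝ[X], (∀ i, d ∣ q₂ i) → IsUnit d) {n : ℕ} (hn : ∀ i, (q₂ i).natDegree ≤ n)
    (hex : ∃ i, q₂ i ≠ 0 ∧ (q₂ i).natDegree = n) :
    ∀ d : ℝ[X], (∀ i, d ∣ mob α β γ δ n (q₂ i)) → IsUnit d := by
  have hneγδ : ¬(γ = 0 ∧ δ = 0) := by rintro ⟨h1, h2⟩; apply hdet; rw [h1, h2]; ring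
  have hne2 : ¬((-γ : ℝ) = 0 ∧ α = 0) := by
    rintro ⟨h1, h2⟩; apply hdet; rw [h2, neg_eq_zero.1 h1]; ring
  intro d hd
  obtain ⟨i₀, hi₀ne, hi₀deg⟩ := hex
  have hm0 : mob α β γ δ n (q₂ i₀) ≠ 0 := mob_ne_zero hdet (hn i₀) hi₀ne
  have hd0 : d ≠ 0 := by rintro rfl; exact hm0 (zero_dvd_iff.1 (hd i₀))
  have hddeg : d.natDegree ≤ n :=
    le_trans (natDegree_le_of_dvd (hd i₀) hm0) (natDegree_mob_le α β γ δ n (q₂ i₀))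
  set m := d.natDegree with hmdef
  set d' := mob δ (-β) (-γ) α m d with hd'def
  have hd' : ∀ i, d' ∣ q₂ i := by
    intro i
    obtain ⟨e, he⟩ := hd i
    by_cases he0 : e = 0
    · have : q₂ i = 0 := by
        by_contra hq0
        exact mob_ne_zero hdet (hn i) hq0 (by rw [he, he0, mul_zero])
      rw [this]; exact dvd_zero _
    · have hedeg : e.natDegree ≤ n - m := by
        have h1 : m + e.natDegree = (mob α β γ δ n (q₂ i)).natDegree := by
          rw [he, natDegree_mul hd0 he0]
        have h2 := natDegree_mob_le α β γ δ n (q₂ i)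
        omega
      have hsplit : mob δ (-β) (-γ) α (m + (n - m)) (d * e)
          = d' * mob δ (-β) (-γ) α (n - m) e := mob_mul hne2 le_rfl hedeg
      rw [show m + (n - m) = n by omega, ← he, mobinv_mob hdet (hn i)] at hsplit
      apply dvd_of_dvd_unit_mul (pow_ne_zero n hdet)
      exact hsplit ▸ ⟨mob δ (-β) (-γ) α (n - m) e, rfl⟩
  have hu' : IsUnit d' := hc2 d' hd'
  obtain ⟨u, hu_unit, hCu⟩ := Polynomial.isUnit_iff.1 hu'
  have hmm : C ((α * δ - β * γ)^m) * d = C u * (C γ * X + C δ)^m := by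
    rw [← mob_mobinv hdet (le_refl m), ← hd'def, ← hCu, mob_C hneγδ]
  by_cases hγ : γ = 0
  · have huu : IsUnit (C ((α * δ - β * γ)^m) * d) := by
      rw [hmm, hγ]
      simp only [C_0, zero_mul, zero_add, ← C_pow, ← C_mul]
      refine isUnit_C.2 (isUnit_iff_ne_zero.2 (mul_ne_zero (isUnit_iff_ne_zero.1 hu_unit) ?_))
      refine pow_ne_zero _ fun hδ => hdet ?_
      rw [hγ, hδ]; ring
    exact isUnit_of_mul_isUnit_right huu
  · have hm : m = 0 := by
      by_contra hm0'
      have hDdvd : (C γ * X + C δ) ∣ d := by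
        apply dvd_of_dvd_unit_mul (pow_ne_zero m hdet)
        rw [hmm]
        exact Dvd.dvd.mul_left (dvd_pow_self _ hm0') _
      exact mob_not_dvd hdet hγ hi₀ne hi₀deg (hDdvd.trans (hd i₀))
    have hdC : d = C (d.coeff 0) := eq_C_of_natDegree_eq_zero hm
    rw [hdC]
    refine isUnit_C.2 (isUnit_iff_ne_zero.2 fun h0 => hd0 ?_)
    rw [hdC, h0, C_0]

/-- Algebraic form of Theorem 2 of the paper: if an affine map `x ↦ Mx + b`
(with `M` invertible) carries the ruled parametrization `p₁ + s q₁` into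
`p₂(ψ̃(t)) + (a(t)s + c(t)) q₂(ψ̃(t))` for all parameters outside a finite set,
where `a` and `c` agree off finite sets with rational functions `ar`, `cr`,
then `ar = k(γX+δ)ⁿ` for some nonzero constant `k`; equivalently,
`a(t) = k(γt+δ)ⁿ` outside a finite set. -/
theorem stmt_15 (α β γ δ : ℝ) (h : α * δ - β * γ ≠ 0)
    (M : Matrix (Fin 3) (Fin 3) ℝ) (hM : IsUnit M) (b : Fin 3 → ℝ)
    (q₁ q₂ : Fin 3 → Polynomial ℝ)
    (hc1 : ∀ d : Polynomial ℝ, (∀ i, d ∣ q₁ i) → IsUnit d)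
    (hc2 : ∀ d : Polynomial ℝ, (∀ i, d ∣ q₂ i) → IsUnit d)
    (p₁ p₂ : ℝ → Fin 3 → ℝ) (a c : ℝ → ℝ) (ar cr : RatFunc ℝ)
    (Fa : Set ℝ) (hFa : Fa.Finite)
    (ha : ∀ t ∉ Fa, a t = RatFunc.eval (RingHom.id ℝ) t ar)
    (Fc : Set ℝ) (hFc : Fc.Finite)
    (hc : ∀ t ∉ Fc, c t = RatFunc.eval (RingHom.id ℝ) t cr)
    (F : Set ℝ) (hF : F.Finite)
    (heq : ∀ t ∉ F, γ * t + δ ≠ 0 → ∀ s : ℝ,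
      M.mulVec (p₁ t + s • fun i => (q₁ i).eval t) + b
        = p₂ ((α * t + β) / (γ * t + δ)) +
          (a t * s + c t) • fun i => (q₂ i).eval ((α * t + β) / (γ * t + δ))) :
    ∃ k : ℝ, k ≠ 0 ∧
      ar = algebraMap (Polynomial ℝ) (RatFunc ℝ)
        (C k * (C γ * X + C δ) ^ (Finset.univ.sup fun i => (q₂ i).natDegree)) ∧
      ∃ G : Set ℝ, G.Finite ∧ ∀ t ∉ G,
        a t = k * (γ * t + δ) ^ (Finset.univ.sup fun i => (q₂ i).natDegree) := by
  set n := Finset.univ.sup fun i => (q₂ i).natDegree with hndef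
  set D : ℝ[X] := C γ * X + C δ with hDdef
  have hneγδ : ¬(γ = 0 ∧ δ = 0) := by rintro ⟨h1, h2⟩; apply h; rw [h1, h2]; ring
  have hDne : D ≠ 0 := by
    intro h0
    rw [hDdef] at h0
    exact hneγδ ⟨by simpa using congrArg (fun p => coeff p 1) h0,
      by simpa using congrArg (fun p => coeff p 0) h0⟩
  have hnle : ∀ i, (q₂ i).natDegree ≤ n := by
    intro i
    rw [hndef]
    exact Finset.le_sup (f := fun i => (q₂ i).natDegree) (Finset.mem_univ i)
  -- existence of a component of exact degree n and nonzero
  have hq2ne : ∃ i, q₂ i ≠ 0 := by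
    by_contra hall
    push_neg at hall
    exact Polynomial.not_isUnit_X (hc2 X fun i => (hall i) ▸ dvd_zero X)
  obtain ⟨i₀, hi₀ne, hi₀deg⟩ : ∃ i, q₂ i ≠ 0 ∧ (q₂ i).natDegree = n := by
    obtain ⟨j, -, hj⟩ := Finset.exists_mem_eq_sup (Finset.univ : Finset (Fin 3))
      Finset.univ_nonempty (fun i => (q₂ i).natDegree)
    by_cases hj0 : q₂ j = 0
    · obtain ⟨i, hi⟩ := hq2ne
      have hn0 : n = 0 := by rw [hndef, hj, hj0, natDegree_zero]
      refine ⟨i, hi, ?_⟩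
      have h1 := hnle i
      rw [hn0] at h1 ⊢
      omega
    · exact ⟨j, hj0, hj.symm⟩
  -- transformed polynomials
  set P : Fin 3 → ℝ[X] := fun i => ∑ j, C (M i j) * q₁ j with hPdef
  have hPeval : ∀ (t : ℝ) (i), (P i).eval t = (M.mulVec fun j => (q₁ j).eval t) i := by
    intro t i
    simp [hPdef, Matrix.mulVec, dotProduct, eval_finset_sum]
  set Q : Fin 3 → ℝ[X] := fun i => mob α β γ δ n (q₂ i) with hQdef
  -- the excluded set
  set S : Set ℝ := ((F ∪ Fa) ∪ {t | γ * t + δ = 0}) ∪ {t | (RatFunc.denom ar).eval t = 0}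
    with hSdef
  have hSfin : S.Finite := by
    refine (((hF.union hFa).union (finite_lin hneγδ)).union ?_)
    exact Polynomial.finite_setOf_isRoot (RatFunc.denom_ne_zero ar)
  -- pointwise identity
  have key : ∀ i, ∀ t ∉ S, (P i * D ^ n * RatFunc.denom ar).eval t
      = (RatFunc.num ar * Q i).eval t := by
    intro i t ht
    simp only [hSdef, Set.mem_union, Set.mem_setOf_eq, not_or] at ht
    obtain ⟨⟨⟨htF, htFa⟩, htD⟩, htden⟩ := ht
    have ht3 : γ * t + δ ≠ 0 := htD
    have e0 := congrFun (heq t htF ht3 0) i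
    have e1 := congrFun (heq t htF ht3 1) i
    simp only [Matrix.mulVec_add, Matrix.mulVec_smul, Pi.add_apply, Pi.smul_apply,
      smul_eq_mul, one_smul, zero_smul, mul_one, mul_zero, zero_add, add_zero] at e0 e1
    have hMv : (M.mulVec fun j => (q₁ j).eval t) i
        = a t * (q₂ i).eval ((α * t + β) / (γ * t + δ)) := by linarith
    have hat : a t = (RatFunc.num ar).eval t / (RatFunc.denom ar).eval t := by
      rw [ha t htFa, RatFunc.eval, eval₂_eq_eval_map, eval₂_eq_eval_map,
        Polynomial.map_id, Polynomial.map_id]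
    simp only [eval_mul, eval_pow, hDdef, eval_add, eval_C, eval_X]
    rw [hPeval, hMv, hat, hQdef]
    rw [eval_mob (hnle i) ht3]
    field_simp
  have Pid : ∀ i, P i * D ^ n * RatFunc.denom ar = RatFunc.num ar * Q i :=
    fun i => eq_of_eval_cofinite hSfin (key i)
  -- denominator is a unit, hence 1
  have hdenQ : ∀ i, RatFunc.denom ar ∣ Q i := by
    intro i
    refine (RatFunc.isCoprime_num_denom ar).symm.dvd_of_dvd_mul_left ?_
    exact ⟨P i * D ^ n, by rw [← Pid i]; ring⟩
  have hdenu : IsUnit (RatFunc.denom ar) :=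
    mob_common_div h q₂ hc2 hnle ⟨i₀, hi₀ne, hi₀deg⟩ _ hdenQ
  have hden1 : RatFunc.denom ar = 1 := (RatFunc.monic_denom ar).eq_one_of_isUnit hdenu
  have Pid2 : ∀ i, P i * D ^ n = RatFunc.num ar * Q i := by
    intro i
    have := Pid i
    rwa [hden1, mul_one] at this
  have har : ar = algebraMap (Polynomial ℝ) (RatFunc ℝ) (RatFunc.num ar) := by
    conv_lhs => rw [← RatFunc.num_div_denom ar]
    rw [hden1, map_one, div_one]
  -- common divisors of P are units
  have hNset : ∃ N : Matrix (Fin 3) (Fin 3) ℝ, N * M = 1 := by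
    refine ⟨↑hM.unit⁻¹, ?_⟩
    have h1 : (↑hM.unit⁻¹ : Matrix (Fin 3) (Fin 3) ℝ) * (↑hM.unit : Matrix (Fin 3) (Fin 3) ℝ) = 1 := hM.unit.inv_mul
    rwa [hM.unit_spec] at h1
  obtain ⟨N, hNM⟩ := hNset
  have hq1P : ∀ j, q₁ j = ∑ i, C (N j i) * P i := by
    intro j
    apply Polynomial.funext
    intro t
    rw [eval_finset_sum]
    simp only [eval_mul, eval_C, hPeval]
    have : ∑ i, N j i * (M.mulVec fun l => (q₁ l).eval t) i
        = (N.mulVec (M.mulVec fun l => (q₁ l).eval t)) j := by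
      simp [Matrix.mulVec, dotProduct]
    rw [this, Matrix.mulVec_mulVec, hNM, Matrix.one_mulVec]
  have hPunit : ∀ d : ℝ[X], (∀ i, d ∣ P i) → IsUnit d := by
    intro d hdP
    refine hc1 d fun j => ?_
    rw [hq1P j]
    exact Finset.dvd_sum fun i _ => (hdP i).mul_left _
  -- final case split
  by_cases hγ : γ = 0
  · -- D is the constant δ
    have hδ : δ ≠ 0 := fun h0 => hneγδ ⟨hγ, h0⟩
    have hnum_dvd : ∀ i, RatFunc.num ar ∣ P i := by
      intro i
      apply dvd_of_dvd_unit_mul (u := δ ^ n) (pow_ne_zero _ hδ)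
      have : C (δ ^ n) * P i = RatFunc.num ar * Q i := by
        rw [← Pid2 i, hDdef, hγ]
        simp only [C_0, zero_mul, zero_add, ← C_pow]
        ring
      exact this ▸ Dvd.intro (Q i) rfl
    have hnumu : IsUnit (RatFunc.num ar) := hPunit _ hnum_dvd
    obtain ⟨k', hk'u, hk'⟩ := Polynomial.isUnit_iff.1 hnumu
    have hk'ne : k' ≠ 0 := isUnit_iff_ne_zero.1 hk'u
    refine ⟨k' / δ ^ n, div_ne_zero hk'ne (pow_ne_zero _ hδ), ?_, Fa, hFa, ?_⟩
    · rw [har, ← hk']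
      congr 1
      rw [hDdef, hγ]
      simp only [C_0, zero_mul, zero_add, ← C_pow, ← C_mul]
      rw [div_mul_cancel₀ _ (pow_ne_zero _ hδ)]
    · intro t htFa
      rw [ha t htFa, har, ← hk', RatFunc.eval, RatFunc.num_algebraMap,
        RatFunc.denom_algebraMap, eval₂_eq_eval_map, eval₂_eq_eval_map,
        Polynomial.map_id, Polynomial.map_id, eval_one, div_one, eval_C, hγ]
      rw [zero_mul, zero_add, div_mul_cancel₀ _ (pow_ne_zero _ hδ)]
  · -- γ ≠ 0 : D is prime
    have hDdeg : D.degree = 1 := by rw [hDdef]; exact degree_linear hγ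
    have hDprime : Prime D :=
      UniqueFactorizationMonoid.irreducible_iff_prime.1 (irreducible_of_degree_eq_one hDdeg)
    have hDQ : ¬ D ∣ Q i₀ := by
      rw [hQdef, hDdef]
      exact mob_not_dvd h hγ hi₀ne hi₀deg
    have hDn_num : D ^ n ∣ RatFunc.num ar := by
      refine hDprime.pow_dvd_of_dvd_mul_right n hDQ ?_
      exact ⟨P i₀, by rw [← Pid2 i₀]; ring⟩
    obtain ⟨A, hA⟩ := hDn_num
    have hAP : ∀ i, A * Q i = P i := by
      intro i
      have h1 : (A * Q i) * D ^ n = P i * D ^ n := by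
        rw [Pid2 i, hA]; ring
      exact mul_right_cancel₀ (pow_ne_zero _ hDne) h1
    have hAunit : IsUnit A := hPunit A fun i => (hAP i) ▸ Dvd.intro (Q i) (by ring)
    obtain ⟨k, hku, hk⟩ := Polynomial.isUnit_iff.1 hAunit
    have hkne : k ≠ 0 := isUnit_iff_ne_zero.1 hku
    refine ⟨k, hkne, ?_, Fa, hFa, ?_⟩
    · rw [har, hA, ← hk]
      congr 1
      ring
    · intro t htFa
      rw [ha t htFa, har, RatFunc.eval, RatFunc.num_algebraMap,
        RatFunc.denom_algebraMap, eval₂_eq_eval_map, eval₂_eq_eval_map,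
        Polynomial.map_id, Polynomial.map_id, eval_one, div_one, hA, ← hk]
      simp only [hDdef, eval_mul, eval_pow, eval_add, eval_C, eval_X]
      ring
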